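/- arXiv:1911.12737 — 2 statements merged into one kernel-verified Lean document; each statement's English description precedes it below -/
import Mathlib

section
/- Correctness of zippy LL(1) parsing with derivatives: for every value type A, every LL(1) syntax s : Syntax A (i.e. ¬HasConflict s), every token sequence ts : List Token and every value v : A, fparse (focus s) ts = some v if and only if Matches s ts v. -/
set_option autoImplicit false

/-- Context-free syntaxes (value-aware context-free expressions). -/
inductive Syn (Token Kind : Type) (Var : Type → Type) : Type → Type 1 where
  | elem (k : Kind) : Syn Token Kind Var Token
  | fail {A : Type} : Syn Token Kind Var A
  | eps {A : Type} (v : A) : Syn Token Kind Var A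
  | disj {A : Type} (s₁ s₂ : Syn Token Kind Var A) : Syn Token Kind Var A
  | seqn {A B : Type} (s₁ : Syn Token Kind Var A) (s₂ : Syn Token Kind Var B) :
      Syn Token Kind Var (A × B)
  | map {A B : Type} (f : A → B) (s : Syn Token Kind Var A) : Syn Token Kind Var B
  | var {A : Type} (x : Var A) : Syn Token Kind Var A

section

variable {Token Kind : Type} {Var : Type → Type}
variable (kd : Token → Kind) (env : ∀ A : Type, Var A → Syn Token Kind Var A)

/-- Semantics of syntaxes. -/
inductive Matches : ∀ {A : Type}, Syn Token Kind Var A → List Token → A → Prop where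
  | elem {k : Kind} {t : Token} (h : kd t = k) : Matches (Syn.elem k) [t] t
  | eps {A : Type} (v : A) : Matches (Syn.eps v) [] v
  | disjL {A : Type} {s₁ s₂ : Syn Token Kind Var A} {ts : List Token} {v : A} :
      Matches s₁ ts v → Matches (Syn.disj s₁ s₂) ts v
  | disjR {A : Type} {s₁ s₂ : Syn Token Kind Var A} {ts : List Token} {v : A} :
      Matches s₂ ts v → Matches (Syn.disj s₁ s₂) ts v
  | seqn {A B : Type} {s₁ : Syn Token Kind Var A} {s₂ : Syn Token Kind Var B}
      {ts₁ ts₂ : List Token} {v₁ : A} {v₂ : B} :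
      Matches s₁ ts₁ v₁ → Matches s₂ ts₂ v₂ →
      Matches (Syn.seqn s₁ s₂) (ts₁ ++ ts₂) (v₁, v₂)
  | map {A B : Type} (f : A → B) {s : Syn Token Kind Var A} {ts : List Token} {v : A} :
      Matches s ts v → Matches (Syn.map f s) ts (f v)
  | var {A : Type} (x : Var A) {ts : List Token} {v : A} :
      Matches (env A x) ts v → Matches (Syn.var x) ts v

/-- Productivity. -/
inductive Productive : ∀ {A : Type}, Syn Token Kind Var A → Prop where
  | eps {A : Type} (v : A) : Productive (Syn.eps v)
  | elem (k : Kind) : Productive (Syn.elem k)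
  | disjL {A : Type} {s₁ s₂ : Syn Token Kind Var A} :
      Productive s₁ → Productive (Syn.disj s₁ s₂)
  | disjR {A : Type} {s₁ s₂ : Syn Token Kind Var A} :
      Productive s₂ → Productive (Syn.disj s₁ s₂)
  | seqn {A B : Type} {s₁ : Syn Token Kind Var A} {s₂ : Syn Token Kind Var B} :
      Productive s₁ → Productive s₂ → Productive (Syn.seqn s₁ s₂)
  | map {A B : Type} (f : A → B) {s : Syn Token Kind Var A} :
      Productive s → Productive (Syn.map f s)
  | var {A : Type} (x : Var A) : Productive (env A x) → Productive (Syn.var x)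

/-- Nullability, with associated value. -/
inductive Nullable : ∀ {A : Type}, Syn Token Kind Var A → A → Prop where
  | eps {A : Type} (v : A) : Nullable (Syn.eps v) v
  | disjL {A : Type} {s₁ s₂ : Syn Token Kind Var A} {v : A} :
      Nullable s₁ v → Nullable (Syn.disj s₁ s₂) v
  | disjR {A : Type} {s₁ s₂ : Syn Token Kind Var A} {v : A} :
      Nullable s₂ v → Nullable (Syn.disj s₁ s₂) v
  | seqn {A B : Type} {s₁ : Syn Token Kind Var A} {s₂ : Syn Token Kind Var B} {v₁ : A} {v₂ : B} :
      Nullable s₁ v₁ → Nullable s₂ v₂ → Nullable (Syn.seqn s₁ s₂) (v₁, v₂)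
  | map {A B : Type} (f : A → B) {s : Syn Token Kind Var A} {v : A} :
      Nullable s v → Nullable (Syn.map f s) (f v)
  | var {A : Type} (x : Var A) {v : A} : Nullable (env A x) v → Nullable (Syn.var x) v

/-- First sets: `InFirst env k s` means `k ∈ First s`. -/
inductive InFirst : ∀ {A : Type}, Kind → Syn Token Kind Var A → Prop where
  | elem (k : Kind) : InFirst k (Syn.elem k)
  | disjL {A : Type} {k : Kind} {s₁ s₂ : Syn Token Kind Var A} :
      InFirst k s₁ → InFirst k (Syn.disj s₁ s₂)
  | disjR {A : Type} {k : Kind} {s₁ s₂ : Syn Token Kind Var A} :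
      InFirst k s₂ → InFirst k (Syn.disj s₁ s₂)
  | seqnL {A B : Type} {k : Kind} {s₁ : Syn Token Kind Var A} {s₂ : Syn Token Kind Var B} :
      InFirst k s₁ → Productive env s₂ → InFirst k (Syn.seqn s₁ s₂)
  | seqnR {A B : Type} {k : Kind} {s₁ : Syn Token Kind Var A} {s₂ : Syn Token Kind Var B}
      {v : A} : Nullable env s₁ v → InFirst k s₂ → InFirst k (Syn.seqn s₁ s₂)
  | map {A B : Type} {k : Kind} (f : A → B) {s : Syn Token Kind Var A} :
      InFirst k s → InFirst k (Syn.map f s)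
  | var {A : Type} {k : Kind} (x : Var A) : InFirst k (env A x) → InFirst k (Syn.var x)

/-- Should-not-follow sets: `InSNF env k s` means `k ∈ ShouldNotFollow s`. -/
inductive InSNF : ∀ {A : Type}, Kind → Syn Token Kind Var A → Prop where
  | disjL {A : Type} {k : Kind} {s₁ s₂ : Syn Token Kind Var A} :
      InSNF k s₁ → InSNF k (Syn.disj s₁ s₂)
  | disjR {A : Type} {k : Kind} {s₁ s₂ : Syn Token Kind Var A} :
      InSNF k s₂ → InSNF k (Syn.disj s₁ s₂)
  | disjFN {A : Type} {k : Kind} {s₁ s₂ : Syn Token Kind Var A} {v : A} :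
      InFirst env k s₁ → Nullable env s₂ v → InSNF k (Syn.disj s₁ s₂)
  | disjNF {A : Type} {k : Kind} {s₁ s₂ : Syn Token Kind Var A} {v : A} :
      Nullable env s₁ v → InFirst env k s₂ → InSNF k (Syn.disj s₁ s₂)
  | seqnL {A B : Type} {k : Kind} {s₁ : Syn Token Kind Var A} {s₂ : Syn Token Kind Var B}
      {v : B} : InSNF k s₁ → Nullable env s₂ v → InSNF k (Syn.seqn s₁ s₂)
  | seqnR {A B : Type} {k : Kind} {s₁ : Syn Token Kind Var A} {s₂ : Syn Token Kind Var B} :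
      Productive env s₁ → InSNF k s₂ → InSNF k (Syn.seqn s₁ s₂)
  | map {A B : Type} {k : Kind} (f : A → B) {s : Syn Token Kind Var A} :
      InSNF k s → InSNF k (Syn.map f s)
  | var {A : Type} {k : Kind} (x : Var A) : InSNF k (env A x) → InSNF k (Syn.var x)

/-- LL(1) conflicts. A syntax `s` is LL(1) iff `¬ HasConflict env s`. -/
inductive HasConflict : ∀ {A : Type}, Syn Token Kind Var A → Prop where
  | disjNN {A : Type} {s₁ s₂ : Syn Token Kind Var A} {v₁ v₂ : A} :
      Nullable env s₁ v₁ → Nullable env s₂ v₂ → HasConflict (Syn.disj s₁ s₂)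
  | disjFF {A : Type} {s₁ s₂ : Syn Token Kind Var A} {k : Kind} :
      InFirst env k s₁ → InFirst env k s₂ → HasConflict (Syn.disj s₁ s₂)
  | disjL {A : Type} {s₁ s₂ : Syn Token Kind Var A} :
      HasConflict s₁ → HasConflict (Syn.disj s₁ s₂)
  | disjR {A : Type} {s₁ s₂ : Syn Token Kind Var A} :
      HasConflict s₂ → HasConflict (Syn.disj s₁ s₂)
  | seqnSF {A B : Type} {s₁ : Syn Token Kind Var A} {s₂ : Syn Token Kind Var B} {k : Kind} :
      InSNF env k s₁ → InFirst env k s₂ → HasConflict (Syn.seqn s₁ s₂)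
  | seqnL {A B : Type} {s₁ : Syn Token Kind Var A} {s₂ : Syn Token Kind Var B} :
      HasConflict s₁ → HasConflict (Syn.seqn s₁ s₂)
  | seqnR {A B : Type} {s₁ : Syn Token Kind Var A} {s₂ : Syn Token Kind Var B} :
      HasConflict s₂ → HasConflict (Syn.seqn s₁ s₂)
  | map {A B : Type} (f : A → B) {s : Syn Token Kind Var A} :
      HasConflict s → HasConflict (Syn.map f s)
  | var {A : Type} (x : Var A) : HasConflict (env A x) → HasConflict (Syn.var x)

end

/-- Layers of a context, with above type `A` and below type `B`. -/
inductive Layer (Token Kind : Type) (Var : Type → Type) : Type → Type → Type 1 where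
  | apply {A B : Type} (f : A → B) : Layer Token Kind Var A B
  | prepend {A C : Type} (v : C) : Layer Token Kind Var A (C × A)
  | followBy {A C : Type} (s : Syn Token Kind Var C) : Layer Token Kind Var A (A × C)

/-- Type-aligned contexts (stacks of layers). -/
inductive Ctx (Token Kind : Type) (Var : Type → Type) : Type → Type → Type 1 where
  | nil {A : Type} : Ctx Token Kind Var A A
  | cons {A B C : Type} (l : Layer Token Kind Var A B) (c : Ctx Token Kind Var B C) :
      Ctx Token Kind Var A C

section

variable {Token Kind : Type} {Var : Type → Type}

def Ctx.isNil : ∀ {A B : Type}, Ctx Token Kind Var A B → Bool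
  | _, _, Ctx.nil => true
  | _, _, Ctx.cons _ _ => false

/-- Unfocusing a focused syntax. -/
def unfocus : ∀ {A B : Type}, Syn Token Kind Var A → Ctx Token Kind Var A B →
    Syn Token Kind Var B
  | _, _, s, Ctx.nil => s
  | _, _, s, Ctx.cons (Layer.apply f) c => unfocus (Syn.map f s) c
  | _, _, s, Ctx.cons (Layer.prepend v) c => unfocus (Syn.seqn (Syn.eps v) s) c
  | _, _, s, Ctx.cons (Layer.followBy s') c => unfocus (Syn.seqn s s') c

/-- Focused syntaxes with below type `B`. -/
def Focused (Token Kind : Type) (Var : Type → Type) (B : Type) : Type 1 :=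
  (A : Type) × Syn Token Kind Var A × Ctx Token Kind Var A B

def unfocusF {B : Type} (fs : Focused Token Kind Var B) : Syn Token Kind Var B :=
  unfocus fs.2.1 fs.2.2

def focusF {A : Type} (s : Syn Token Kind Var A) : Focused Token Kind Var A :=
  ⟨A, s, Ctx.nil⟩

/-- Plugging a value into a context. -/
def plug : ∀ {A B : Type}, A → Ctx Token Kind Var A B → Focused Token Kind Var B
  | A, _, v, Ctx.nil => ⟨A, Syn.eps v, Ctx.nil⟩
  | _, _, v, Ctx.cons (Layer.apply f) c => plug (f v) c
  | _, _, v, Ctx.cons (Layer.prepend v') c => plug (v', v) c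
  | _, _, v, Ctx.cons (Layer.followBy s) c => ⟨_, s, Ctx.cons (Layer.prepend v) c⟩

end


section MyAux

variable {Token Kind : Type} {Var : Type → Type}
variable {kd : Token → Kind} {env : ∀ A : Type, Var A → Syn Token Kind Var A}

/-! ### Inversion helpers for `seqn`-shaped hypotheses -/

def MSeqInv (kd : Token → Kind) (env : ∀ A : Type, Var A → Syn Token Kind Var A) :
    ∀ {C : Type}, Syn Token Kind Var C → List Token → C → Prop
  | _, Syn.seqn s₁ s₂, ts, p =>
      ∃ ts₁ ts₂ v₁ v₂, ts = ts₁ ++ ts₂ ∧ p = (v₁, v₂) ∧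
        Matches kd env s₁ ts₁ v₁ ∧ Matches kd env s₂ ts₂ v₂
  | _, _, _, _ => True

theorem matches_seqn_inv {A B : Type} {s₁ : Syn Token Kind Var A} {s₂ : Syn Token Kind Var B}
    {ts : List Token} {p : A × B} (h : Matches kd env (Syn.seqn s₁ s₂) ts p) :
    ∃ ts₁ ts₂ v₁ v₂, ts = ts₁ ++ ts₂ ∧ p = (v₁, v₂) ∧
      Matches kd env s₁ ts₁ v₁ ∧ Matches kd env s₂ ts₂ v₂ := by
  have aux : ∀ {C : Type} (u : Syn Token Kind Var C) (ts : List Token) (v : C),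
      Matches kd env u ts v → MSeqInv kd env u ts v := by
    intro C u ts v h
    cases h <;> first
      | exact ⟨_, _, _, _, rfl, rfl, ‹_›, ‹_›⟩
      | trivial
  exact aux _ _ _ h

def NSeqInv (env : ∀ A : Type, Var A → Syn Token Kind Var A) :
    ∀ {C : Type}, Syn Token Kind Var C → C → Prop
  | _, Syn.seqn s₁ s₂, p =>
      ∃ v₁ v₂, p = (v₁, v₂) ∧ Nullable env s₁ v₁ ∧ Nullable env s₂ v₂
  | _, _, _ => True

theorem nullable_seqn_inv {A B : Type} {s₁ : Syn Token Kind Var A} {s₂ : Syn Token Kind Var B}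
    {p : A × B} (h : Nullable env (Syn.seqn s₁ s₂) p) :
    ∃ v₁ v₂, p = (v₁, v₂) ∧ Nullable env s₁ v₁ ∧ Nullable env s₂ v₂ := by
  have aux : ∀ {C : Type} (u : Syn Token Kind Var C) (v : C),
      Nullable env u v → NSeqInv env u v := by
    intro C u v h
    cases h <;> first
      | exact ⟨_, _, rfl, ‹_›, ‹_›⟩
      | trivial
  exact aux _ _ h

def PSeqInv (env : ∀ A : Type, Var A → Syn Token Kind Var A) :
    ∀ {C : Type}, Syn Token Kind Var C → Prop
  | _, Syn.seqn s₁ s₂ => Productive env s₁ ∧ Productive env s₂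
  | _, _ => True

theorem productive_seqn_inv {A B : Type} {s₁ : Syn Token Kind Var A} {s₂ : Syn Token Kind Var B}
    (h : Productive env (Syn.seqn s₁ s₂)) : Productive env s₁ ∧ Productive env s₂ := by
  have aux : ∀ {C : Type} (u : Syn Token Kind Var C),
      Productive env u → PSeqInv env u := by
    intro C u h
    cases h <;> first
      | exact ⟨‹_›, ‹_›⟩
      | trivial
  exact aux _ h

def FSeqInv (env : ∀ A : Type, Var A → Syn Token Kind Var A) (k : Kind) :
    ∀ {C : Type}, Syn Token Kind Var C → Prop
  | _, Syn.seqn s₁ s₂ =>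
      (InFirst env k s₁ ∧ Productive env s₂) ∨ (∃ v, Nullable env s₁ v ∧ InFirst env k s₂)
  | _, _ => True

theorem infirst_seqn_inv {A B : Type} {k : Kind} {s₁ : Syn Token Kind Var A}
    {s₂ : Syn Token Kind Var B} (h : InFirst env k (Syn.seqn s₁ s₂)) :
    (InFirst env k s₁ ∧ Productive env s₂) ∨ (∃ v, Nullable env s₁ v ∧ InFirst env k s₂) := by
  have aux : ∀ {C : Type} (u : Syn Token Kind Var C),
      InFirst env k u → FSeqInv env k u := by
    intro C u h
    cases h <;> first
      | exact Or.inl ⟨‹_›, ‹_›⟩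
      | exact Or.inr ⟨_, ‹_›, ‹_›⟩
      | trivial
  exact aux _ h

def SSeqInv (env : ∀ A : Type, Var A → Syn Token Kind Var A) (k : Kind) :
    ∀ {C : Type}, Syn Token Kind Var C → Prop
  | _, Syn.seqn s₁ s₂ =>
      (∃ v, InSNF env k s₁ ∧ Nullable env s₂ v) ∨ (Productive env s₁ ∧ InSNF env k s₂)
  | _, _ => True

theorem insnf_seqn_inv {A B : Type} {k : Kind} {s₁ : Syn Token Kind Var A}
    {s₂ : Syn Token Kind Var B} (h : InSNF env k (Syn.seqn s₁ s₂)) :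
    (∃ v, InSNF env k s₁ ∧ Nullable env s₂ v) ∨ (Productive env s₁ ∧ InSNF env k s₂) := by
  have aux : ∀ {C : Type} (u : Syn Token Kind Var C),
      InSNF env k u → SSeqInv env k u := by
    intro C u h
    cases h <;> first
      | exact Or.inl ⟨_, ‹_›, ‹_›⟩
      | exact Or.inr ⟨‹_›, ‹_›⟩
      | trivial
  exact aux _ h

def CSeqInv (env : ∀ A : Type, Var A → Syn Token Kind Var A) :
    ∀ {C : Type}, Syn Token Kind Var C → Prop
  | _, Syn.seqn s₁ s₂ =>
      (∃ k, InSNF env k s₁ ∧ InFirst env k s₂) ∨ HasConflict env s₁ ∨ HasConflict env s₂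
  | _, _ => True

theorem hasconflict_seqn_inv {A B : Type} {s₁ : Syn Token Kind Var A}
    {s₂ : Syn Token Kind Var B} (h : HasConflict env (Syn.seqn s₁ s₂)) :
    (∃ k, InSNF env k s₁ ∧ InFirst env k s₂) ∨ HasConflict env s₁ ∨ HasConflict env s₂ := by
  have aux : ∀ {C : Type} (u : Syn Token Kind Var C),
      HasConflict env u → CSeqInv env u := by
    intro C u h
    cases h <;> first
      | exact Or.inl ⟨_, ‹_›, ‹_›⟩
      | exact Or.inr (Or.inl ‹_›)
      | exact Or.inr (Or.inr ‹_›)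
      | trivial
  exact aux _ h

end MyAux
section MyAux2

variable {Token Kind : Type} {Var : Type → Type}
variable {kd : Token → Kind} {env : ∀ A : Type, Var A → Syn Token Kind Var A}

theorem matches_productive {A : Type} {s : Syn Token Kind Var A} {ts : List Token} {v : A}
    (h : Matches kd env s ts v) : Productive env s := by
  induction h with
  | elem h => exact .elem _
  | eps v => exact .eps v
  | disjL _ ih => exact .disjL ih
  | disjR _ ih => exact .disjR ih
  | seqn _ _ ih1 ih2 => exact .seqn ih1 ih2
  | map f _ ih => exact .map f ih
  | var x _ ih => exact .var x ih

theorem nullable_matches {A : Type} {s : Syn Token Kind Var A} {v : A}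
    (h : Nullable env s v) : Matches kd env s [] v := by
  induction h with
  | eps v => exact .eps v
  | disjL _ ih => exact .disjL ih
  | disjR _ ih => exact .disjR ih
  | seqn _ _ ih1 ih2 => exact .seqn ih1 ih2
  | map f _ ih => exact .map f ih
  | var x _ ih => exact .var x ih

theorem matches_nil_nullable {A : Type} {s : Syn Token Kind Var A} {ts : List Token} {v : A}
    (h : Matches kd env s ts v) (hts : ts = []) : Nullable env s v := by
  induction h with
  | elem h => simp at hts
  | eps v => exact .eps v
  | disjL _ ih => exact .disjL (ih hts)
  | disjR _ ih => exact .disjR (ih hts)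
  | seqn _ _ ih1 ih2 =>
    rcases List.append_eq_nil_iff.mp hts with ⟨h1, h2⟩
    exact .seqn (ih1 h1) (ih2 h2)
  | map f _ ih => exact .map f (ih hts)
  | var x _ ih => exact .var x (ih hts)

theorem nullable_productive {A : Type} {s : Syn Token Kind Var A} {v : A}
    (h : Nullable env s v) : Productive env s := by
  induction h with
  | eps v => exact .eps v
  | disjL _ ih => exact .disjL ih
  | disjR _ ih => exact .disjR ih
  | seqn _ _ ih1 ih2 => exact .seqn ih1 ih2
  | map f _ ih => exact .map f ih
  | var x _ ih => exact .var x ih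

theorem matches_cons_first {A : Type} {s : Syn Token Kind Var A} {ts : List Token} {v : A}
    (h : Matches kd env s ts v) : ∀ t rest, ts = t :: rest → InFirst env (kd t) s := by
  induction h with
  | elem h =>
    intro t rest hts
    cases hts
    rw [h]
    exact .elem _
  | eps v => intro t rest hts; simp at hts
  | disjL _ ih => exact fun t rest hts => .disjL (ih t rest hts)
  | disjR _ ih => exact fun t rest hts => .disjR (ih t rest hts)
  | seqn h1 h2 ih1 ih2 =>
    intro t rest hts
    rename_i ts₁ ts₂ v₁ v₂
    cases ts₁ with
    | nil =>
      exact .seqnR (matches_nil_nullable h1 rfl) (ih2 t rest hts)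
    | cons x xs =>
      simp only [List.cons_append, List.cons.injEq] at hts
      obtain ⟨rfl, hts⟩ := hts
      exact .seqnL (ih1 _ xs rfl) (matches_productive h2)
  | map f _ ih => exact fun t rest hts => .map f (ih t rest hts)
  | var x _ ih => exact fun t rest hts => .var x (ih t rest hts)

theorem nullable_first_snf {A : Type} {s : Syn Token Kind Var A} {v : A} {k : Kind}
    (hn : Nullable env s v) : InFirst env k s → InSNF env k s := by
  induction hn with
  | eps v => intro hf; cases hf
  | disjL hn ih =>
    intro hf
    cases hf with
    | disjL hf => exact .disjL (ih hf)
    | disjR hf => exact .disjNF hn hf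
  | disjR hn ih =>
    intro hf
    cases hf with
    | disjL hf => exact .disjFN hf hn
    | disjR hf => exact .disjR (ih hf)
  | seqn hn1 hn2 ih1 ih2 =>
    intro hf
    rcases infirst_seqn_inv hf with ⟨hf1, _⟩ | ⟨w, _, hf2⟩
    · exact .seqnL (ih1 hf1) hn2
    · exact .seqnR (nullable_productive hn1) (ih2 hf2)
  | map f hn ih =>
    intro hf
    cases hf with
    | map _ hf => exact .map f (ih hf)
  | var x hn ih =>
    intro hf
    cases hf with
    | var _ hf => exact .var x (ih hf)

/-! ### A comparison relation transporting conflicts through contexts -/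

def SynLe (env : ∀ A : Type, Var A → Syn Token Kind Var A) {A : Type}
    (s t : Syn Token Kind Var A) : Prop :=
  (∀ k, InSNF env k s → InSNF env k t) ∧ (Productive env s → Productive env t) ∧
    (HasConflict env s → HasConflict env t)

theorem synle_eps_elem {t : Token} {k : Kind} :
    SynLe env (Syn.eps t) (Syn.elem k : Syn Token Kind Var Token) := by
  refine ⟨fun k' h => ?_, fun _ => .elem k, fun h => ?_⟩ <;> cases h

theorem synle_eps_nullable {A : Type} {s : Syn Token Kind Var A} {v : A}
    (hn : Nullable env s v) : SynLe env (Syn.eps v) s := by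
  refine ⟨fun k' h => ?_, fun _ => nullable_productive hn, fun h => ?_⟩ <;> cases h

theorem synle_disjL {A : Type} {s₁ s₂ : Syn Token Kind Var A} :
    SynLe env s₁ (Syn.disj s₁ s₂) :=
  ⟨fun _ h => .disjL h, fun h => .disjL h, fun h => .disjL h⟩

theorem synle_disjR {A : Type} {s₁ s₂ : Syn Token Kind Var A} :
    SynLe env s₂ (Syn.disj s₁ s₂) :=
  ⟨fun _ h => .disjR h, fun h => .disjR h, fun h => .disjR h⟩

theorem synle_env_var {A : Type} {x : Var A} :
    SynLe env (env A x) (Syn.var x) :=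
  ⟨fun _ h => .var x h, fun h => .var x h, fun h => .var x h⟩

theorem synle_map {A B : Type} {f : A → B} {s t : Syn Token Kind Var A}
    (h : SynLe env s t) : SynLe env (Syn.map f s) (Syn.map f t) := by
  obtain ⟨h1, h2, h3⟩ := h
  refine ⟨fun k hs => ?_, fun hs => ?_, fun hs => ?_⟩
  · cases hs with
    | map _ hs => exact .map f (h1 _ hs)
  · cases hs with
    | map _ hs => exact .map f (h2 hs)
  · cases hs with
    | map _ hs => exact .map f (h3 hs)

theorem synle_seqnCong {A B : Type} {s t : Syn Token Kind Var A}
    {u : Syn Token Kind Var B} (h : SynLe env s t) :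
    SynLe env (Syn.seqn s u) (Syn.seqn t u) := by
  obtain ⟨h1, h2, h3⟩ := h
  refine ⟨fun k hs => ?_, fun hs => ?_, fun hs => ?_⟩
  · rcases insnf_seqn_inv hs with ⟨w, hs1, hn2⟩ | ⟨hp, hs2⟩
    · exact .seqnL (h1 _ hs1) hn2
    · exact .seqnR (h2 hp) hs2
  · obtain ⟨hp1, hp2⟩ := productive_seqn_inv hs
    exact .seqn (h2 hp1) hp2
  · rcases hasconflict_seqn_inv hs with ⟨k, hs1, hf2⟩ | hc | hc
    · exact .seqnSF (h1 _ hs1) hf2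
    · exact .seqnL (h3 hc)
    · exact .seqnR hc

theorem synle_prependCong {A C : Type} {w : C} {s t : Syn Token Kind Var A}
    (h : SynLe env s t) :
    SynLe env (Syn.seqn (Syn.eps w) s) (Syn.seqn (Syn.eps w) t) := by
  obtain ⟨h1, h2, h3⟩ := h
  refine ⟨fun k hs => ?_, fun hs => ?_, fun hs => ?_⟩
  · rcases insnf_seqn_inv hs with ⟨v, hs1, hn2⟩ | ⟨hp, hs2⟩
    · cases hs1
    · exact .seqnR (.eps w) (h1 _ hs2)
  · obtain ⟨hp1, hp2⟩ := productive_seqn_inv hs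
    exact .seqn (.eps w) (h2 hp2)
  · rcases hasconflict_seqn_inv hs with ⟨k, hs1, hf2⟩ | hc | hc
    · cases hs1
    · cases hc
    · exact .seqnR (h3 hc)

theorem synle_unfocus {B : Type} :
    ∀ {A : Type} (c : Ctx Token Kind Var A B) (s t : Syn Token Kind Var A),
      SynLe env s t → HasConflict env (unfocus s c) → HasConflict env (unfocus t c) := by
  intro A c
  induction c with
  | nil => exact fun s t h => h.2.2
  | cons l c ih =>
    intro s t h
    cases l with
    | apply f => exact ih _ _ (synle_map h)
    | prepend v => exact ih _ _ (synle_prependCong h)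
    | followBy s' => exact ih _ _ (synle_seqnCong h)

theorem hc_unfocus {B : Type} :
    ∀ {A : Type} (c : Ctx Token Kind Var A B) (s : Syn Token Kind Var A),
      HasConflict env s → HasConflict env (unfocus s c) := by
  intro A c
  induction c with
  | nil => exact fun s h => h
  | cons l c ih =>
    intro s h
    cases l with
    | apply f => exact ih _ (.map f h)
    | prepend v => exact ih _ (.seqnR h)
    | followBy s' => exact ih _ (.seqnL h)

end MyAux2
section MyAux3

variable {Token Kind : Type} {Var : Type → Type}

/-- Semantics of contexts: `CM kd env c ts a b` means the context `c`, with hole value `a`,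
consumes `ts` and yields `b`. -/
inductive CM (kd : Token → Kind) (env : ∀ A : Type, Var A → Syn Token Kind Var A) :
    ∀ {A B : Type}, Ctx Token Kind Var A B → List Token → A → B → Prop where
  | nil {A : Type} (a : A) : CM kd env Ctx.nil [] a a
  | apply {A B C : Type} {f : A → B} {c : Ctx Token Kind Var B C} {ts : List Token}
      {a : A} {b : C} :
      CM kd env c ts (f a) b → CM kd env (Ctx.cons (Layer.apply f) c) ts a b
  | prepend {A C D : Type} {v : C} {c : Ctx Token Kind Var (C × A) D} {ts : List Token}
      {a : A} {b : D} :
      CM kd env c ts (v, a) b → CM kd env (Ctx.cons (Layer.prepend v) c) ts a b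
  | followBy {A C D : Type} {s' : Syn Token Kind Var C} {c : Ctx Token Kind Var (A × C) D}
      {ts₁ ts₂ : List Token} {w : C} {a : A} {b : D} :
      Matches kd env s' ts₁ w → CM kd env c ts₂ (a, w) b →
      CM kd env (Ctx.cons (Layer.followBy s') c) (ts₁ ++ ts₂) a b

variable {kd : Token → Kind} {env : ∀ A : Type, Var A → Syn Token Kind Var A}


def CCInv (kd : Token → Kind) (env : ∀ A : Type, Var A → Syn Token Kind Var A) :
    ∀ {A B : Type}, Ctx Token Kind Var A B → List Token → A → B → Prop
  | _, _, Ctx.nil, ts, a, b => ts = [] ∧ a = b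
  | _, _, Ctx.cons (Layer.apply f) c, ts, a, b => CM kd env c ts (f a) b
  | _, _, Ctx.cons (Layer.prepend v) c, ts, a, b => CM kd env c ts (v, a) b
  | _, _, Ctx.cons (Layer.followBy s') c, ts, a, b =>
      ∃ ts₁ ts₂ w, ts = ts₁ ++ ts₂ ∧ Matches kd env s' ts₁ w ∧ CM kd env c ts₂ (a, w) b

theorem cm_inv {A B : Type} {c : Ctx Token Kind Var A B} {ts : List Token} {a : A} {b : B}
    (h : CM kd env c ts a b) : CCInv kd env c ts a b := by
  cases h with
  | nil => exact ⟨rfl, rfl⟩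
  | apply h => exact h
  | prepend h => exact h
  | followBy hm h => exact ⟨_, _, _, rfl, hm, h⟩

theorem unfocus_iff {B : Type} :
    ∀ {A : Type} (c : Ctx Token Kind Var A B) (s : Syn Token Kind Var A)
      (ts : List Token) (v : B),
      Matches kd env (unfocus s c) ts v ↔
        ∃ ts₁ ts₂ a, ts = ts₁ ++ ts₂ ∧ Matches kd env s ts₁ a ∧ CM kd env c ts₂ a v := by
  intro A c
  induction c with
  | nil =>
    intro s ts v
    constructor
    · intro h; exact ⟨ts, [], v, (List.append_nil ts).symm, h, CM.nil v⟩
    · rintro ⟨ts₁, ts₂, a, rfl, h, hcm⟩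
      cases hcm
      simpa using (show Matches kd env (unfocus s Ctx.nil) ts₁ v from h)
  | cons l c ih =>
    cases l with
    | apply f =>
      intro s ts v
      rw [show unfocus s (Ctx.cons (Layer.apply f) c) = unfocus (Syn.map f s) c from rfl, ih]
      constructor
      · rintro ⟨ts₁, ts₂, a, rfl, hm, hcm⟩
        cases hm with
        | map _ hm' => exact ⟨ts₁, ts₂, _, rfl, hm', CM.apply hcm⟩
      · rintro ⟨ts₁, ts₂, a, rfl, hm, hcm⟩
        cases hcm with
        | apply hcm' => exact ⟨ts₁, ts₂, f a, rfl, Matches.map f hm, hcm'⟩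
    | prepend w =>
      intro s ts v
      rw [show unfocus s (Ctx.cons (Layer.prepend w) c) =
            unfocus (Syn.seqn (Syn.eps w) s) c from rfl, ih]
      constructor
      · rintro ⟨ts₁, ts₂, a, rfl, hm, hcm⟩
        obtain ⟨u₁, u₂, w₁, w₂, rfl, rfl, hm1, hm2⟩ := matches_seqn_inv hm
        cases hm1
        exact ⟨u₂, ts₂, w₂, by simp, hm2, CM.prepend hcm⟩
      · rintro ⟨ts₁, ts₂, a, rfl, hm, hcm⟩
        have hcm' := cm_inv hcm
        exact ⟨ts₁, ts₂, (w, a), rfl, Matches.seqn (Matches.eps w) hm, hcm'⟩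
    | followBy s' =>
      intro s ts v
      rw [show unfocus s (Ctx.cons (Layer.followBy s') c) =
            unfocus (Syn.seqn s s') c from rfl, ih]
      constructor
      · rintro ⟨ts₁, ts₂, a, rfl, hm, hcm⟩
        obtain ⟨u₁, u₂, w₁, w₂, rfl, rfl, hm1, hm2⟩ := matches_seqn_inv hm
        exact ⟨u₁, u₂ ++ ts₂, w₁, by simp, hm1, CM.followBy hm2 hcm⟩
      · rintro ⟨ts₁, ts₂, a, rfl, hm, hcm⟩
        obtain ⟨u₁, u₂, w', rfl, hm', hcm'⟩ := cm_inv hcm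
        exact ⟨ts₁ ++ u₁, u₂, (a, w'), by simp, Matches.seqn hm hm', hcm'⟩

theorem plug_iff {B : Type} :
    ∀ {A : Type} (c : Ctx Token Kind Var A B) (v' : A) (ts : List Token) (v : B),
      Matches kd env (unfocusF (plug v' c)) ts v ↔ CM kd env c ts v' v := by
  intro A c
  induction c with
  | nil =>
    intro v' ts v
    constructor
    · intro h
      cases h
      exact CM.nil _
    · intro h
      cases h
      exact Matches.eps _
  | cons l c ih =>
    cases l with
    | apply f =>
      intro v' ts v
      rw [show plug v' (Ctx.cons (Layer.apply f) c) = plug (f v') c from rfl, ih]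
      constructor
      · exact fun h => CM.apply h
      · intro h
        cases h with
        | apply h => exact h
    | prepend w =>
      intro v' ts v
      rw [show plug v' (Ctx.cons (Layer.prepend w) c) = plug (w, v') c from rfl, ih]
      constructor
      · exact fun h => CM.prepend h
      · exact fun h => cm_inv h
    | followBy s' =>
      intro v' ts v
      rw [show unfocusF (plug v' (Ctx.cons (Layer.followBy s') c)) =
            unfocus s' (Ctx.cons (Layer.prepend v') c) from rfl, unfocus_iff]
      constructor
      · rintro ⟨ts₁, ts₂, a, rfl, hm, hcm⟩
        exact CM.followBy hm (cm_inv hcm)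
      · intro h
        obtain ⟨u₁, u₂, w', rfl, hm, hcm⟩ := cm_inv h
        exact ⟨u₁, u₂, w', rfl, hm, CM.prepend hcm⟩

theorem snf_cm {B : Type} :
    ∀ {A : Type} (c : Ctx Token Kind Var A B) (s : Syn Token Kind Var A) {k : Kind}
      {a : A} {v : B} {ts : List Token},
      ¬ HasConflict env (unfocus s c) → InSNF env k s → CM kd env c ts a v →
      ∀ t rest, ts = t :: rest → kd t = k → False := by
  intro A c
  induction c with
  | nil =>
    intro s k a v ts _ _ hcm t rest hts hk
    cases hcm
    simp at hts
  | cons l c ih =>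
    intro s k a v ts hnc hsnf hcm t rest hts hk
    cases l with
    | apply f =>
      cases hcm with
      | apply hcm => exact ih (Syn.map f s) hnc (.map f hsnf) hcm t rest hts hk
    | prepend w =>
      exact ih (Syn.seqn (Syn.eps w) s) hnc (.seqnR (.eps w) hsnf) (cm_inv hcm) t rest hts hk
    | followBy s₂ =>
      obtain ⟨ts₁, ts₂, w', rfl, hm, hcm2⟩ := cm_inv hcm
      cases ts₁ with
      | nil =>
        exact ih (Syn.seqn s s₂) hnc (.seqnL hsnf (matches_nil_nullable hm rfl)) hcm2
          t rest hts hk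
      | cons x xs =>
        simp only [List.cons_append, List.cons.injEq] at hts
        obtain ⟨rfl, -⟩ := hts
        have hf : InFirst env k s₂ := hk ▸ matches_cons_first hm _ xs rfl
        exact hnc (hc_unfocus c (Syn.seqn s s₂) (.seqnSF hsnf hf))

theorem plug_nhc {B : Type} :
    ∀ {A : Type} (c : Ctx Token Kind Var A B) (s : Syn Token Kind Var A) (v' : A),
      ¬ HasConflict env (unfocus s c) → Nullable env s v' →
      ¬ HasConflict env (unfocusF (plug v' c)) := by
  intro A c
  induction c with
  | nil =>
    intro s v' _ _ h
    cases h
  | cons l c ih =>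
    intro s v' hnc hn
    cases l with
    | apply f => exact ih (Syn.map f s) (f v') hnc (.map f hn)
    | prepend w => exact ih (Syn.seqn (Syn.eps w) s) (w, v') hnc (.seqn (.eps w) hn)
    | followBy s₂ =>
      intro h
      exact hnc (synle_unfocus c _ _ (synle_seqnCong (synle_eps_nullable hn)) h)

def wt : ∀ {A B : Type}, Ctx Token Kind Var A B → Nat
  | _, _, Ctx.nil => 0
  | _, _, Ctx.cons (Layer.followBy _) c => wt c + 2
  | _, _, Ctx.cons (Layer.apply _) c => wt c + 1
  | _, _, Ctx.cons (Layer.prepend _) c => wt c + 1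

theorem wt_plug_le : ∀ {A B : Type} (c : Ctx Token Kind Var A B) (v : A),
    wt (plug v c).2.2 ≤ wt c := by
  intro A B c
  induction c with
  | nil => intro v; exact Nat.le_refl _
  | cons l c ih =>
    intro v
    cases l with
    | apply f =>
      exact Nat.le_trans (ih (f v)) (Nat.le_succ _)
    | prepend w =>
      exact Nat.le_trans (ih (w, v)) (Nat.le_succ _)
    | followBy s' =>
      show wt c + 1 ≤ wt c + 2
      omega

theorem wt_plug_lt {A B C : Type} (l : Layer Token Kind Var A B)
    (c : Ctx Token Kind Var B C) (v : A) :
    wt (plug v (Ctx.cons l c)).2.2 < wt (Ctx.cons l c) := by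
  cases l with
  | apply f =>
    exact Nat.lt_of_le_of_lt (wt_plug_le c (f v)) (Nat.lt_succ_self _)
  | prepend w =>
    exact Nat.lt_of_le_of_lt (wt_plug_le c (w, v)) (Nat.lt_succ_self _)
  | followBy s' =>
    show wt c + 1 < wt c + 2
    omega

end MyAux3
section MyAux4

variable {Token Kind : Type} {Var : Type → Type}
variable {kd : Token → Kind} {env : ∀ A : Type, Var A → Syn Token Kind Var A}

theorem unfocus_congr {A B : Type} {s s' : Syn Token Kind Var A}
    (h : ∀ ts a, Matches kd env s ts a ↔ Matches kd env s' ts a)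
    (c : Ctx Token Kind Var A B) (ts : List Token) (v : B) :
    Matches kd env (unfocus s c) ts v ↔ Matches kd env (unfocus s' c) ts v := by
  rw [unfocus_iff, unfocus_iff]
  constructor <;> rintro ⟨ts₁, ts₂, a, rfl, hm, hcm⟩
  · exact ⟨ts₁, ts₂, a, rfl, (h _ _).mp hm, hcm⟩
  · exact ⟨ts₁, ts₂, a, rfl, (h _ _).mpr hm, hcm⟩

theorem matches_var_iff {A : Type} {x : Var A} (ts : List Token) (v : A) :
    Matches kd env (Syn.var x) ts v ↔ Matches kd env (env A x) ts v := by
  constructor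
  · intro h
    cases h with
    | var _ h => exact h
  · exact fun h => .var x h

theorem disjEquivL {A B : Type} {s₁ s₂ : Syn Token Kind Var A} {c : Ctx Token Kind Var A B}
    {k : Kind} {t : Token}
    (hnc : ¬ HasConflict env (unfocus (Syn.disj s₁ s₂) c))
    (h1 : InFirst env k s₁) (hk : kd t = k) (ts : List Token) (v : B) :
    Matches kd env (unfocus (Syn.disj s₁ s₂) c) (t :: ts) v ↔
      Matches kd env (unfocus s₁ c) (t :: ts) v := by
  have hncd : ¬ HasConflict env (Syn.disj s₁ s₂) := fun h => hnc (hc_unfocus c _ h)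
  rw [unfocus_iff, unfocus_iff]
  constructor
  · rintro ⟨ts₁, ts₂, a, he, hm, hcm⟩
    cases hm with
    | disjL hm => exact ⟨ts₁, ts₂, a, he, hm, hcm⟩
    | disjR hm =>
      cases ts₁ with
      | nil =>
        have hsnf := nullable_first_snf (Nullable.disjR (matches_nil_nullable hm rfl))
          (InFirst.disjL h1)
        exact (snf_cm c _ hnc hsnf hcm t ts (by simpa using he.symm) hk).elim
      | cons x xs =>
        simp only [List.cons_append, List.cons.injEq] at he
        obtain ⟨rfl, -⟩ := he
        exact absurd (HasConflict.disjFF h1 (hk ▸ matches_cons_first hm _ xs rfl)) hncd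
  · rintro ⟨ts₁, ts₂, a, he, hm, hcm⟩
    exact ⟨ts₁, ts₂, a, he, .disjL hm, hcm⟩

theorem disjEquivR {A B : Type} {s₁ s₂ : Syn Token Kind Var A} {c : Ctx Token Kind Var A B}
    {k : Kind} {t : Token}
    (hnc : ¬ HasConflict env (unfocus (Syn.disj s₁ s₂) c))
    (hf2 : InFirst env k s₂) (h1 : ¬ InFirst env k s₁) (hk : kd t = k)
    (ts : List Token) (v : B) :
    Matches kd env (unfocus (Syn.disj s₁ s₂) c) (t :: ts) v ↔
      Matches kd env (unfocus s₂ c) (t :: ts) v := by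
  rw [unfocus_iff, unfocus_iff]
  constructor
  · rintro ⟨ts₁, ts₂, a, he, hm, hcm⟩
    cases hm with
    | disjR hm => exact ⟨ts₁, ts₂, a, he, hm, hcm⟩
    | disjL hm =>
      cases ts₁ with
      | nil =>
        have hsnf := nullable_first_snf (Nullable.disjL (matches_nil_nullable hm rfl))
          (InFirst.disjR hf2)
        exact (snf_cm c _ hnc hsnf hcm t ts (by simpa using he.symm) hk).elim
      | cons x xs =>
        simp only [List.cons_append, List.cons.injEq] at he
        obtain ⟨rfl, -⟩ := he
        exact absurd (hk ▸ matches_cons_first hm _ xs rfl) h1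
  · rintro ⟨ts₁, ts₂, a, he, hm, hcm⟩
    exact ⟨ts₁, ts₂, a, he, .disjR hm, hcm⟩

theorem seqnEquiv {A A' B : Type} {s₁ : Syn Token Kind Var A} {s₂ : Syn Token Kind Var A'}
    {c : Ctx Token Kind Var (A × A') B} {k : Kind} {t : Token} {v₀ : A}
    (hn₁ : Nullable env s₁ v₀) (hone : ∀ a, Nullable env s₁ a → a = v₀)
    (h1 : ¬ InFirst env k s₁) (hk : kd t = k) (ts : List Token) (v : B) :
    Matches kd env (unfocus (Syn.seqn s₁ s₂) c) (t :: ts) v ↔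
      Matches kd env (unfocus (Syn.seqn (Syn.eps v₀) s₂) c) (t :: ts) v := by
  rw [unfocus_iff, unfocus_iff]
  constructor
  · rintro ⟨ts₁, ts₂, a, he, hm, hcm⟩
    obtain ⟨u₁, u₂, a₁, a₂, rfl, rfl, hm1, hm2⟩ := matches_seqn_inv hm
    cases u₁ with
    | nil =>
      obtain rfl := hone a₁ (matches_nil_nullable hm1 rfl)
      exact ⟨[] ++ u₂, ts₂, (a₁, a₂), he, Matches.seqn (Matches.eps a₁) hm2, hcm⟩
    | cons x xs =>
      simp only [List.cons_append, List.append_assoc, List.cons.injEq] at he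
      obtain ⟨rfl, -⟩ := he
      exact absurd (hk ▸ matches_cons_first hm1 _ xs rfl) h1
  · rintro ⟨ts₁, ts₂, a, he, hm, hcm⟩
    obtain ⟨u₁, u₂, a₁, a₂, rfl, rfl, hm1, hm2⟩ := matches_seqn_inv hm
    cases hm1
    exact ⟨[] ++ u₂, ts₂, (_, a₂), he, Matches.seqn (nullable_matches hn₁) hm2, hcm⟩

end MyAux4
section MyAux5

variable {Token Kind : Type} {Var : Type → Type}
variable {kd : Token → Kind} {env : ∀ A : Type, Var A → Syn Token Kind Var A}

theorem locate_spec
    (nullOpt : ∀ {A : Type}, Syn Token Kind Var A → Option A)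
    (hnull : ∀ {A : Type} (s : Syn Token Kind Var A), ¬ HasConflict env s →
      ∀ v : A, nullOpt s = some v ↔ Nullable env s v)
    (locate : ∀ {B : Type}, Kind → Focused Token Kind Var B →
      Option (Focused Token Kind Var B))
    (hlocate_first : ∀ {A B : Type} (k : Kind) (s : Syn Token Kind Var A)
      (c : Ctx Token Kind Var A B), InFirst env k s →
      locate k (⟨A, s, c⟩ : Focused Token Kind Var B) =
        some (⟨A, s, c⟩ : Focused Token Kind Var B))
    (hlocate_plug : ∀ {A B : Type} (k : Kind) (s : Syn Token Kind Var A)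
      (c : Ctx Token Kind Var A B) (v : A),
      ¬ InFirst env k s → nullOpt s = some v → c.isNil = false →
      locate k (⟨A, s, c⟩ : Focused Token Kind Var B) = locate k (plug v c))
    (hlocate_none₁ : ∀ {A B : Type} (k : Kind) (s : Syn Token Kind Var A)
      (c : Ctx Token Kind Var A B),
      ¬ InFirst env k s → nullOpt s = none →
      locate k (⟨A, s, c⟩ : Focused Token Kind Var B) = none)
    (hlocate_none₂ : ∀ {A : Type} (k : Kind) (s : Syn Token Kind Var A),
      ¬ InFirst env k s →
      locate k (⟨A, s, Ctx.nil⟩ : Focused Token Kind Var A) = none)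
    {B : Type} :
    ∀ (n : Nat) (fs : Focused Token Kind Var B), wt fs.2.2 = n →
      ¬ HasConflict env (unfocusF fs) → ∀ k : Kind,
      (∀ fs', locate k fs = some fs' →
        InFirst env k fs'.2.1 ∧ ¬ HasConflict env (unfocusF fs') ∧
        ∀ t ts v, kd t = k →
          (Matches kd env (unfocusF fs) (t :: ts) v ↔
            Matches kd env (unfocusF fs') (t :: ts) v)) ∧
      (locate k fs = none → ∀ t ts v, kd t = k →
        ¬ Matches kd env (unfocusF fs) (t :: ts) v) := by
  intro n
  induction n using Nat.strong_induction_on with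
  | _ n ih =>
    rintro ⟨A, s, c⟩ rfl hnc k
    have hncs : ¬ HasConflict env s := fun h => hnc (hc_unfocus c s h)
    by_cases hf : InFirst env k s
    · constructor
      · intro fs' heq
        rw [hlocate_first k s c hf] at heq
        cases heq
        exact ⟨hf, hnc, fun t ts v hk => Iff.rfl⟩
      · intro h0
        rw [hlocate_first k s c hf] at h0
        cases h0
    · cases hno : nullOpt s with
      | none =>
        have hl := hlocate_none₁ k s c hf hno
        constructor
        · intro fs' heq
          rw [hl] at heq
          cases heq
        · intro _ t ts v hk hm
          replace hm : Matches kd env (unfocus s c) (t :: ts) v := hm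
          rw [unfocus_iff] at hm
          obtain ⟨ts₁, ts₂, a, he, hm1, hcm⟩ := hm
          cases ts₁ with
          | nil =>
            have := (hnull s hncs a).mpr (matches_nil_nullable hm1 rfl)
            rw [hno] at this
            cases this
          | cons x xs =>
            simp only [List.cons_append, List.cons.injEq] at he
            obtain ⟨rfl, -⟩ := he
            exact hf (hk ▸ matches_cons_first hm1 _ xs rfl)
      | some w =>
        have hnw : Nullable env s w := (hnull s hncs w).mp hno
        cases c with
        | nil =>
          have hl := hlocate_none₂ k s hf
          constructor
          · intro fs' heq
            rw [hl] at heq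
            cases heq
          · intro _ t ts v hk hm
            exact hf (hk ▸ matches_cons_first hm _ ts rfl)
        | cons l c₀ =>
          have hl := hlocate_plug k s (Ctx.cons l c₀) w hf hno rfl
          have hnp : ¬ HasConflict env (unfocusF (plug w (Ctx.cons l c₀))) :=
            plug_nhc (Ctx.cons l c₀) s w hnc hnw
          have hlt : wt (plug w (Ctx.cons l c₀)).2.2 < wt (Ctx.cons l c₀) :=
            wt_plug_lt l c₀ w
          have IH := ih _ hlt (plug w (Ctx.cons l c₀)) rfl hnp k
          have E : ∀ t ts v, kd t = k →
              (Matches kd env (unfocus s (Ctx.cons l c₀)) (t :: ts) v ↔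
                Matches kd env (unfocusF (plug w (Ctx.cons l c₀))) (t :: ts) v) := by
            intro t ts v hk
            rw [plug_iff, unfocus_iff]
            constructor
            · rintro ⟨ts₁, ts₂, a, he, hm1, hcm⟩
              cases ts₁ with
              | nil =>
                have ha := (hnull s hncs a).mpr (matches_nil_nullable hm1 rfl)
                rw [hno] at ha
                cases ha
                simpa using he ▸ hcm
              | cons x xs =>
                simp only [List.cons_append, List.cons.injEq] at he
                obtain ⟨rfl, -⟩ := he
                exact absurd (hk ▸ matches_cons_first hm1 _ xs rfl) hf
            · intro hcm
              exact ⟨[], t :: ts, w, rfl, nullable_matches hnw, hcm⟩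
          constructor
          · intro fs' heq
            rw [hl] at heq
            obtain ⟨h1, h2, h3⟩ := IH.1 fs' heq
            exact ⟨h1, h2, fun t ts v hk => (E t ts v hk).trans (h3 t ts v hk)⟩
          · intro h0 t ts v hk hm
            rw [hl] at h0
            exact IH.2 h0 t ts v hk ((E t ts v hk).mp hm)

theorem result_spec
    (nullOpt : ∀ {A : Type}, Syn Token Kind Var A → Option A)
    (hnull : ∀ {A : Type} (s : Syn Token Kind Var A), ¬ HasConflict env s →
      ∀ v : A, nullOpt s = some v ↔ Nullable env s v)
    (result : ∀ {B : Type}, Focused Token Kind Var B → Option B)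
    (hresult_none : ∀ {A B : Type} (s : Syn Token Kind Var A) (c : Ctx Token Kind Var A B),
      nullOpt s = none → result (⟨A, s, c⟩ : Focused Token Kind Var B) = none)
    (hresult_nil : ∀ {A : Type} (s : Syn Token Kind Var A) (v : A),
      nullOpt s = some v → result (⟨A, s, Ctx.nil⟩ : Focused Token Kind Var A) = some v)
    (hresult_plug : ∀ {A B : Type} (s : Syn Token Kind Var A) (c : Ctx Token Kind Var A B)
      (v : A), nullOpt s = some v → c.isNil = false →
      result (⟨A, s, c⟩ : Focused Token Kind Var B) = result (plug v c))
    {B : Type} :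
    ∀ (n : Nat) (fs : Focused Token Kind Var B), wt fs.2.2 = n →
      ¬ HasConflict env (unfocusF fs) → ∀ v : B,
      (result fs = some v ↔ Matches kd env (unfocusF fs) [] v) := by
  intro n
  induction n using Nat.strong_induction_on with
  | _ n ih =>
    rintro ⟨A, s, c⟩ rfl hnc v
    have hncs : ¬ HasConflict env s := fun h => hnc (hc_unfocus c s h)
    cases hno : nullOpt s with
    | none =>
      rw [hresult_none s c hno]
      constructor
      · intro h
        cases h
      · intro hm
        replace hm : Matches kd env (unfocus s c) [] v := hm
        rw [unfocus_iff] at hm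
        obtain ⟨ts₁, ts₂, a, he, hm1, hcm⟩ := hm
        obtain ⟨rfl, rfl⟩ := List.append_eq_nil_iff.mp he.symm
        have := (hnull s hncs a).mpr (matches_nil_nullable hm1 rfl)
        rw [hno] at this
        cases this
    | some w =>
      have hnw : Nullable env s w := (hnull s hncs w).mp hno
      cases c with
      | nil =>
        rw [hresult_nil s w hno]
        constructor
        · intro h
          cases h
          exact nullable_matches hnw
        · intro hm
          have := (hnull s hncs v).mpr (matches_nil_nullable hm rfl)
          rw [hno] at this
          cases this
          rfl
      | cons l c₀ =>
        rw [hresult_plug s (Ctx.cons l c₀) w hno rfl]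
        have hnp : ¬ HasConflict env (unfocusF (plug w (Ctx.cons l c₀))) :=
          plug_nhc (Ctx.cons l c₀) s w hnc hnw
        rw [ih _ (wt_plug_lt l c₀ w) (plug w (Ctx.cons l c₀)) rfl hnp v]
        rw [show unfocusF (⟨A, s, Ctx.cons l c₀⟩ : Focused Token Kind Var B) =
              unfocus s (Ctx.cons l c₀) from rfl]
        rw [plug_iff, unfocus_iff]
        constructor
        · intro hcm
          exact ⟨[], [], w, rfl, nullable_matches hnw, hcm⟩
        · rintro ⟨ts₁, ts₂, a, he, hm1, hcm⟩
          obtain ⟨rfl, rfl⟩ := List.append_eq_nil_iff.mp he.symm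
          have ha := (hnull s hncs a).mpr (matches_nil_nullable hm1 rfl)
          rw [hno] at ha
          cases ha
          exact hcm

end MyAux5
section MyAux6

variable {Token Kind : Type} {Var : Type → Type}
variable {kd : Token → Kind} {env : ∀ A : Type, Var A → Syn Token Kind Var A}

theorem pierce_spec
    (nullOpt : ∀ {A : Type}, Syn Token Kind Var A → Option A)
    (hnull : ∀ {A : Type} (s : Syn Token Kind Var A), ¬ HasConflict env s →
      ∀ v : A, nullOpt s = some v ↔ Nullable env s v)
    (pierce : ∀ {A B : Type}, Kind → Syn Token Kind Var A → Ctx Token Kind Var A B →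
      Ctx Token Kind Var Token B)
    (hpierce_elem : ∀ {B : Type} (k : Kind) (c : Ctx Token Kind Var Token B),
      pierce k (Syn.elem k) c = c)
    (hpierce_disj₁ : ∀ {A B : Type} (k : Kind) (s₁ s₂ : Syn Token Kind Var A)
      (c : Ctx Token Kind Var A B),
      ¬ HasConflict env (Syn.disj s₁ s₂) → InFirst env k (Syn.disj s₁ s₂) →
      InFirst env k s₁ → pierce k (Syn.disj s₁ s₂) c = pierce k s₁ c)
    (hpierce_disj₂ : ∀ {A B : Type} (k : Kind) (s₁ s₂ : Syn Token Kind Var A)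
      (c : Ctx Token Kind Var A B),
      ¬ HasConflict env (Syn.disj s₁ s₂) → InFirst env k (Syn.disj s₁ s₂) →
      ¬ InFirst env k s₁ → pierce k (Syn.disj s₁ s₂) c = pierce k s₂ c)
    (hpierce_seqn₁ : ∀ {A B C : Type} (k : Kind) (s₁ : Syn Token Kind Var A)
      (s₂ : Syn Token Kind Var B) (c : Ctx Token Kind Var (A × B) C),
      ¬ HasConflict env (Syn.seqn s₁ s₂) → InFirst env k (Syn.seqn s₁ s₂) →
      (nullOpt s₁ = none ∨ InFirst env k s₁) →
      pierce k (Syn.seqn s₁ s₂) c = pierce k s₁ (Ctx.cons (Layer.followBy s₂) c))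
    (hpierce_seqn₂ : ∀ {A B C : Type} (k : Kind) (s₁ : Syn Token Kind Var A)
      (s₂ : Syn Token Kind Var B) (c : Ctx Token Kind Var (A × B) C) (v : A),
      ¬ HasConflict env (Syn.seqn s₁ s₂) → InFirst env k (Syn.seqn s₁ s₂) →
      nullOpt s₁ = some v → ¬ InFirst env k s₁ →
      pierce k (Syn.seqn s₁ s₂) c = pierce k s₂ (Ctx.cons (Layer.prepend v) c))
    (hpierce_map : ∀ {A B C : Type} (k : Kind) (f : A → B) (s : Syn Token Kind Var A)
      (c : Ctx Token Kind Var B C),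
      ¬ HasConflict env (Syn.map f s) → InFirst env k (Syn.map f s) →
      pierce k (Syn.map f s) c = pierce k s (Ctx.cons (Layer.apply f) c))
    (hpierce_var : ∀ {A B : Type} (k : Kind) (x : Var A) (c : Ctx Token Kind Var A B),
      ¬ HasConflict env (Syn.var x : Syn Token Kind Var A) →
      InFirst env k (Syn.var x : Syn Token Kind Var A) →
      pierce k (Syn.var x) c = pierce k (env A x) c)
    {A : Type} {k : Kind} {s : Syn Token Kind Var A} (hf : InFirst env k s) :
    ∀ {B : Type} (c : Ctx Token Kind Var A B), ¬ HasConflict env (unfocus s c) →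
      ∀ t : Token, kd t = k →
        ¬ HasConflict env (unfocus (Syn.eps t) (pierce k s c)) ∧
        ∀ ts v, Matches kd env (unfocus s c) (t :: ts) v ↔
          Matches kd env (unfocus (Syn.eps t) (pierce k s c)) ts v := by
  induction hf with
  | elem k0 =>
    intro B c hnc t hk
    rw [hpierce_elem k0 c]
    refine ⟨fun h => hnc (synle_unfocus c _ _ synle_eps_elem h), fun ts v => ?_⟩
    rw [unfocus_iff, unfocus_iff]
    constructor
    · rintro ⟨ts₁, ts₂, a, he, hm, hcm⟩
      cases hm with
      | elem h =>
        simp only [List.singleton_append, List.cons.injEq] at he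
        obtain ⟨rfl, rfl⟩ := he
        exact ⟨[], ts, _, rfl, Matches.eps _, hcm⟩
    · rintro ⟨ts₁, ts₂, a, he, hm, hcm⟩
      cases hm
      exact ⟨[t], ts₂, t, by simpa using he, Matches.elem hk, hcm⟩
  | disjL hf1 ih =>
    rename_i kk s₁ s₂
    intro B c hnc t hk
    have hncd : ¬ HasConflict env (Syn.disj s₁ s₂) := fun h => hnc (hc_unfocus c _ h)
    by_cases h1 : InFirst env kk s₁
    · rw [hpierce_disj₁ kk s₁ s₂ c hncd (InFirst.disjL hf1) h1]
      have hnc1 : ¬ HasConflict env (unfocus s₁ c) := fun h =>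
        hnc (synle_unfocus c _ _ synle_disjL h)
      have IH := ih c hnc1 t hk
      exact ⟨IH.1, fun ts v => (disjEquivL hnc h1 hk ts v).trans (IH.2 ts v)⟩
    · exact absurd hf1 h1
  | disjR hf2 ih =>
    rename_i kk s₁ s₂
    intro B c hnc t hk
    have hncd : ¬ HasConflict env (Syn.disj s₁ s₂) := fun h => hnc (hc_unfocus c _ h)
    by_cases h1 : InFirst env kk s₁
    · exact absurd (HasConflict.disjFF h1 hf2) hncd
    · rw [hpierce_disj₂ kk s₁ s₂ c hncd (InFirst.disjR hf2) h1]
      have hnc2 : ¬ HasConflict env (unfocus s₂ c) := fun h =>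
        hnc (synle_unfocus c _ _ synle_disjR h)
      have IH := ih c hnc2 t hk
      exact ⟨IH.1, fun ts v => (disjEquivR hnc hf2 h1 hk ts v).trans (IH.2 ts v)⟩
  | seqnL hf1 hp2 ih =>
    rename_i kk s₁ s₂
    intro B c hnc t hk
    have hncs : ¬ HasConflict env (Syn.seqn s₁ s₂) := fun h => hnc (hc_unfocus c _ h)
    rw [hpierce_seqn₁ kk s₁ s₂ c hncs (InFirst.seqnL hf1 hp2) (Or.inr hf1)]
    exact ih (Ctx.cons (Layer.followBy s₂) c) hnc t hk
  | seqnR hn1 hf2 ih =>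
    rename_i kk s₁ s₂ v₀
    intro B c hnc t hk
    have hncs : ¬ HasConflict env (Syn.seqn s₁ s₂) := fun h => hnc (hc_unfocus c _ h)
    have hncs1 : ¬ HasConflict env s₁ := fun h => hncs (.seqnL h)
    by_cases h1 : InFirst env kk s₁
    · exact absurd (HasConflict.seqnSF (nullable_first_snf hn1 h1) hf2) hncs
    · have hno : nullOpt s₁ = some v₀ := (hnull s₁ hncs1 v₀).mpr hn1
      rw [hpierce_seqn₂ kk s₁ s₂ c v₀ hncs (InFirst.seqnR hn1 hf2) hno h1]
      have hnc' : ¬ HasConflict env (unfocus (Syn.seqn (Syn.eps v₀) s₂) c) := fun h =>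
        hnc (synle_unfocus c _ _ (synle_seqnCong (synle_eps_nullable hn1)) h)
      have IH := ih (Ctx.cons (Layer.prepend v₀) c) hnc' t hk
      have hone : ∀ a, Nullable env s₁ a → a = v₀ := by
        intro a ha
        have h2 := (hnull s₁ hncs1 a).mpr ha
        rw [hno] at h2
        exact (Option.some.inj h2).symm
      exact ⟨IH.1, fun ts v => (seqnEquiv hn1 hone h1 hk ts v).trans (IH.2 ts v)⟩
  | map f hf' ih =>
    rename_i kk s0
    intro B c hnc t hk
    rw [hpierce_map kk f s0 c (fun h => hnc (hc_unfocus c _ h)) (InFirst.map f hf')]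
    exact ih (Ctx.cons (Layer.apply f) c) hnc t hk
  | var x hf' ih =>
    rename_i kk
    intro B c hnc t hk
    rw [hpierce_var kk x c (fun h => hnc (hc_unfocus c _ h)) (InFirst.var x hf')]
    have hnc' : ¬ HasConflict env (unfocus (env _ x) c) := fun h =>
      hnc (synle_unfocus c _ _ synle_env_var h)
    have IH := ih c hnc' t hk
    exact ⟨IH.1, fun ts v =>
      (unfocus_congr (fun ts a => matches_var_iff ts a) c (t :: ts) v).trans (IH.2 ts v)⟩

end MyAux6

section

variable {Token Kind : Type} {Var : Type → Type}
variable (kd : Token → Kind) (env : ∀ A : Type, Var A → Syn Token Kind Var A)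


theorem zippy_ll1_parse_correct
    (nullOpt : ∀ {A : Type}, Syn Token Kind Var A → Option A)
    (hnull : ∀ {A : Type} (s : Syn Token Kind Var A), ¬ HasConflict env s →
      ∀ v : A, nullOpt s = some v ↔ Nullable env s v)
    (locate : ∀ {B : Type}, Kind → Focused Token Kind Var B →
      Option (Focused Token Kind Var B))
    (hlocate_first : ∀ {A B : Type} (k : Kind) (s : Syn Token Kind Var A)
      (c : Ctx Token Kind Var A B), InFirst env k s →
      locate k (⟨A, s, c⟩ : Focused Token Kind Var B) =
        some (⟨A, s, c⟩ : Focused Token Kind Var B))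
    (hlocate_plug : ∀ {A B : Type} (k : Kind) (s : Syn Token Kind Var A)
      (c : Ctx Token Kind Var A B) (v : A),
      ¬ InFirst env k s → nullOpt s = some v → c.isNil = false →
      locate k (⟨A, s, c⟩ : Focused Token Kind Var B) = locate k (plug v c))
    (hlocate_none₁ : ∀ {A B : Type} (k : Kind) (s : Syn Token Kind Var A)
      (c : Ctx Token Kind Var A B),
      ¬ InFirst env k s → nullOpt s = none →
      locate k (⟨A, s, c⟩ : Focused Token Kind Var B) = none)
    (hlocate_none₂ : ∀ {A : Type} (k : Kind) (s : Syn Token Kind Var A),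
      ¬ InFirst env k s →
      locate k (⟨A, s, Ctx.nil⟩ : Focused Token Kind Var A) = none)
    (pierce : ∀ {A B : Type}, Kind → Syn Token Kind Var A → Ctx Token Kind Var A B →
      Ctx Token Kind Var Token B)
    (hpierce_elem : ∀ {B : Type} (k : Kind) (c : Ctx Token Kind Var Token B),
      pierce k (Syn.elem k) c = c)
    (hpierce_disj₁ : ∀ {A B : Type} (k : Kind) (s₁ s₂ : Syn Token Kind Var A)
      (c : Ctx Token Kind Var A B),
      ¬ HasConflict env (Syn.disj s₁ s₂) → InFirst env k (Syn.disj s₁ s₂) →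
      InFirst env k s₁ → pierce k (Syn.disj s₁ s₂) c = pierce k s₁ c)
    (hpierce_disj₂ : ∀ {A B : Type} (k : Kind) (s₁ s₂ : Syn Token Kind Var A)
      (c : Ctx Token Kind Var A B),
      ¬ HasConflict env (Syn.disj s₁ s₂) → InFirst env k (Syn.disj s₁ s₂) →
      ¬ InFirst env k s₁ → pierce k (Syn.disj s₁ s₂) c = pierce k s₂ c)
    (hpierce_seqn₁ : ∀ {A B C : Type} (k : Kind) (s₁ : Syn Token Kind Var A)
      (s₂ : Syn Token Kind Var B) (c : Ctx Token Kind Var (A × B) C),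
      ¬ HasConflict env (Syn.seqn s₁ s₂) → InFirst env k (Syn.seqn s₁ s₂) →
      (nullOpt s₁ = none ∨ InFirst env k s₁) →
      pierce k (Syn.seqn s₁ s₂) c = pierce k s₁ (Ctx.cons (Layer.followBy s₂) c))
    (hpierce_seqn₂ : ∀ {A B C : Type} (k : Kind) (s₁ : Syn Token Kind Var A)
      (s₂ : Syn Token Kind Var B) (c : Ctx Token Kind Var (A × B) C) (v : A),
      ¬ HasConflict env (Syn.seqn s₁ s₂) → InFirst env k (Syn.seqn s₁ s₂) →
      nullOpt s₁ = some v → ¬ InFirst env k s₁ →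
      pierce k (Syn.seqn s₁ s₂) c = pierce k s₂ (Ctx.cons (Layer.prepend v) c))
    (hpierce_map : ∀ {A B C : Type} (k : Kind) (f : A → B) (s : Syn Token Kind Var A)
      (c : Ctx Token Kind Var B C),
      ¬ HasConflict env (Syn.map f s) → InFirst env k (Syn.map f s) →
      pierce k (Syn.map f s) c = pierce k s (Ctx.cons (Layer.apply f) c))
    (hpierce_var : ∀ {A B : Type} (k : Kind) (x : Var A) (c : Ctx Token Kind Var A B),
      ¬ HasConflict env (Syn.var x : Syn Token Kind Var A) →
      InFirst env k (Syn.var x : Syn Token Kind Var A) →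
      pierce k (Syn.var x) c = pierce k (env A x) c)
    (deriveF : ∀ {B : Type}, Token → Focused Token Kind Var B →
      Option (Focused Token Kind Var B))
    (hderiveF_none : ∀ {B : Type} (t : Token) (fs : Focused Token Kind Var B),
      locate (kd t) fs = none → deriveF t fs = none)
    (hderiveF_some : ∀ {B : Type} (t : Token) (fs fs' : Focused Token Kind Var B),
      locate (kd t) fs = some fs' →
      deriveF t fs =
        some (⟨Token, Syn.eps t, pierce (kd t) fs'.2.1 fs'.2.2⟩ : Focused Token Kind Var B))
    (result : ∀ {B : Type}, Focused Token Kind Var B → Option B)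
    (hresult_none : ∀ {A B : Type} (s : Syn Token Kind Var A) (c : Ctx Token Kind Var A B),
      nullOpt s = none → result (⟨A, s, c⟩ : Focused Token Kind Var B) = none)
    (hresult_nil : ∀ {A : Type} (s : Syn Token Kind Var A) (v : A),
      nullOpt s = some v → result (⟨A, s, Ctx.nil⟩ : Focused Token Kind Var A) = some v)
    (hresult_plug : ∀ {A B : Type} (s : Syn Token Kind Var A) (c : Ctx Token Kind Var A B)
      (v : A), nullOpt s = some v → c.isNil = false →
      result (⟨A, s, c⟩ : Focused Token Kind Var B) = result (plug v c))
    (fparse : ∀ {B : Type}, Focused Token Kind Var B → List Token → Option B)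
    (hfparse_nil : ∀ {B : Type} (fs : Focused Token Kind Var B), fparse fs [] = result fs)
    (hfparse_none : ∀ {B : Type} (fs : Focused Token Kind Var B) (t : Token) (ts : List Token),
      deriveF t fs = none → fparse fs (t :: ts) = none)
    (hfparse_some : ∀ {B : Type} (fs fs' : Focused Token Kind Var B) (t : Token)
      (ts : List Token), deriveF t fs = some fs' → fparse fs (t :: ts) = fparse fs' ts)
    {A : Type} (s : Syn Token Kind Var A) (hs : ¬ HasConflict env s)
    (ts : List Token) (v : A) :
    fparse (focusF s) ts = some v ↔ Matches kd env s ts v    := by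
  have main : ∀ (ts : List Token) {B : Type} (fs : Focused Token Kind Var B),
      ¬ HasConflict env (unfocusF fs) → ∀ v : B,
      (fparse fs ts = some v ↔ Matches kd env (unfocusF fs) ts v) := by
    intro ts0
    induction ts0 with
    | nil =>
      intro B fs hnc v0
      rw [hfparse_nil fs]
      exact result_spec (kd := kd) @nullOpt @hnull @result @hresult_none @hresult_nil @hresult_plug
        (wt fs.2.2) fs rfl hnc v0
    | cons t ts1 ih =>
      intro B fs hnc v0
      have LS := locate_spec (kd := kd) @nullOpt @hnull @locate @hlocate_first @hlocate_plug
        @hlocate_none₁ @hlocate_none₂ (wt fs.2.2) fs rfl hnc (kd t)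
      cases hl : locate (kd t) fs with
      | none =>
        rw [hfparse_none fs t ts1 (hderiveF_none t fs hl)]
        have hnm := LS.2 hl t ts1 v0 rfl
        constructor
        · intro h
          cases h
        · intro hm
          exact absurd hm hnm
      | some fs' =>
        obtain ⟨hfirst, hnc', E⟩ := LS.1 fs' hl
        rw [hfparse_some fs _ t ts1 (hderiveF_some t fs fs' hl)]
        have PS := pierce_spec (kd := kd) @nullOpt @hnull @pierce @hpierce_elem @hpierce_disj₁
          @hpierce_disj₂ @hpierce_seqn₁ @hpierce_seqn₂ @hpierce_map @hpierce_var
          hfirst fs'.2.2 hnc' t rfl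
        have IH := ih (⟨Token, Syn.eps t, pierce (kd t) fs'.2.1 fs'.2.2⟩ :
          Focused Token Kind Var B) PS.1 v0
        exact IH.trans ((PS.2 ts1 v0).symm.trans (E t ts1 v0 rfl).symm)
  exact main ts (focusF s) hs v

end
end

section
/- If locate returns none then the focused syntax cannot start with the given kind: for every LL(1) focused syntax (s, c) and kind k, if locate k (s, c) = none then k ∉ First (unfocus (s, c)). -/
set_option autoImplicit false

section Aux

variable {Token Kind : Type} {Var : Type → Type}
variable (env : ∀ A : Type, Var A → Syn Token Kind Var A)


def InFirstInvStmt : ∀ {A : Type}, Kind → Syn Token Kind Var A → Prop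
  | _, k, Syn.elem k' => k = k'
  | _, _, Syn.fail => False
  | _, _, Syn.eps _ => False
  | _, k, Syn.disj s₁ s₂ => InFirst env k s₁ ∨ InFirst env k s₂
  | _, k, Syn.seqn s₁ s₂ =>
      (InFirst env k s₁ ∧ Productive env s₂) ∨ ((∃ v, Nullable env s₁ v) ∧ InFirst env k s₂)
  | _, k, Syn.map _ s => InFirst env k s
  | _, k, Syn.var x => InFirst env k (env _ x)

theorem inFirst_inv {A : Type} {k : Kind} {s : Syn Token Kind Var A}
    (h : InFirst env k s) : InFirstInvStmt env k s := by
  cases h with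
  | elem => exact rfl
  | disjL h => exact Or.inl h
  | disjR h => exact Or.inr h
  | seqnL h hp => exact Or.inl ⟨h, hp⟩
  | seqnR hn h => exact Or.inr ⟨⟨_, hn⟩, h⟩
  | map f h => exact h
  | var x h => exact h

def NullableInvStmt : ∀ {A : Type}, Syn Token Kind Var A → A → Prop
  | _, Syn.elem _, _ => False
  | _, Syn.fail, _ => False
  | _, Syn.eps v, w => w = v
  | _, Syn.disj s₁ s₂, v => Nullable env s₁ v ∨ Nullable env s₂ v
  | _, Syn.seqn s₁ s₂, v => Nullable env s₁ v.1 ∧ Nullable env s₂ v.2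
  | _, Syn.map f s, w => ∃ v, Nullable env s v ∧ w = f v
  | _, Syn.var x, v => Nullable env (env _ x) v

theorem nullable_inv {A : Type} {s : Syn Token Kind Var A} {v : A}
    (h : Nullable env s v) : NullableInvStmt env s v := by
  cases h with
  | eps v => exact rfl
  | disjL h => exact Or.inl h
  | disjR h => exact Or.inr h
  | seqn h1 h2 => exact ⟨h1, h2⟩
  | map f h => exact ⟨_, h, rfl⟩
  | var x h => exact h

def ctxLen : ∀ {A B : Type}, Ctx Token Kind Var A B → Nat
  | _, _, Ctx.nil => 0
  | _, _, Ctx.cons _ c => ctxLen c + 1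

theorem conflict_unfocus : ∀ {A B : Type} (s : Syn Token Kind Var A)
    (c : Ctx Token Kind Var A B), HasConflict env s → HasConflict env (unfocus s c)
  | _, _, _, Ctx.nil, h => h
  | _, _, s, Ctx.cons (Layer.apply f) c, h =>
    conflict_unfocus (Syn.map f s) c (HasConflict.map f h)
  | _, _, s, Ctx.cons (Layer.prepend v) c, h =>
    conflict_unfocus _ c (HasConflict.seqnR h)
  | _, _, s, Ctx.cons (Layer.followBy s') c, h =>
    conflict_unfocus _ c (HasConflict.seqnL h)

theorem opaque_unfocus {k : Kind} : ∀ {A B : Type} (s : Syn Token Kind Var A)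
    (c : Ctx Token Kind Var A B),
    ¬ InFirst env k s → (∀ v, ¬ Nullable env s v) → ¬ InFirst env k (unfocus s c)
  | _, _, _, Ctx.nil, hf, _ => hf
  | _, _, s, Ctx.cons (Layer.apply f) c, hf, hn =>
    opaque_unfocus (Syn.map f s) c
      (fun h => hf (inFirst_inv env h))
      (fun v h => by
        obtain ⟨w, hw, -⟩ := nullable_inv env h
        exact hn _ hw)
  | _, _, s, Ctx.cons (Layer.prepend v') c, hf, hn =>
    opaque_unfocus _ c
      (fun h => by
        rcases inFirst_inv env h with ⟨h', -⟩ | ⟨-, h'⟩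
        · exact (inFirst_inv env h').elim
        · exact hf h')
      (fun v h => hn _ (nullable_inv env h).2)
  | _, _, s, Ctx.cons (Layer.followBy s') c, hf, hn =>
    opaque_unfocus _ c
      (fun h => by
        rcases inFirst_inv env h with ⟨h', -⟩ | ⟨⟨w, hw⟩, -⟩
        · exact hf h'
        · exact hn _ hw)
      (fun v h => hn _ (nullable_inv env h).1)

end Aux

section

variable {Token Kind : Type} {Var : Type → Type}
variable (kd : Token → Kind) (env : ∀ A : Type, Var A → Syn Token Kind Var A)

theorem locate_none_not_first
    (nullOpt : ∀ {A : Type}, Syn Token Kind Var A → Option A)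
    (hnull : ∀ {A : Type} (s : Syn Token Kind Var A), ¬ HasConflict env s →
      ∀ v : A, nullOpt s = some v ↔ Nullable env s v)
    (locate : ∀ {B : Type}, Kind → Focused Token Kind Var B →
      Option (Focused Token Kind Var B))
    (hlocate_first : ∀ {A B : Type} (k : Kind) (s : Syn Token Kind Var A)
      (c : Ctx Token Kind Var A B), InFirst env k s →
      locate k (⟨A, s, c⟩ : Focused Token Kind Var B) =
        some (⟨A, s, c⟩ : Focused Token Kind Var B))
    (hlocate_plug : ∀ {A B : Type} (k : Kind) (s : Syn Token Kind Var A)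
      (c : Ctx Token Kind Var A B) (v : A),
      ¬ InFirst env k s → nullOpt s = some v → c.isNil = false →
      locate k (⟨A, s, c⟩ : Focused Token Kind Var B) = locate k (plug v c))
    (hlocate_none₁ : ∀ {A B : Type} (k : Kind) (s : Syn Token Kind Var A)
      (c : Ctx Token Kind Var A B),
      ¬ InFirst env k s → nullOpt s = none →
      locate k (⟨A, s, c⟩ : Focused Token Kind Var B) = none)
    (hlocate_none₂ : ∀ {A : Type} (k : Kind) (s : Syn Token Kind Var A),
      ¬ InFirst env k s →
      locate k (⟨A, s, Ctx.nil⟩ : Focused Token Kind Var A) = none)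
    {A B : Type} (s : Syn Token Kind Var A) (c : Ctx Token Kind Var A B) (k : Kind)
    (hll1 : ¬ HasConflict env (unfocus s c))
    (h : locate k (⟨A, s, c⟩ : Focused Token Kind Var B) = none) :
    ¬ InFirst env k (unfocus s c) := by
  suffices H : ∀ n, ∀ {A B : Type} (s : Syn Token Kind Var A) (c : Ctx Token Kind Var A B),
      ctxLen c ≤ n → ¬ HasConflict env (unfocus s c) →
      locate k (⟨A, s, c⟩ : Focused Token Kind Var B) = none →
      ¬ InFirst env k (unfocus s c) from H (ctxLen c) s c le_rfl hll1 h
  intro n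
  induction n using Nat.strong_induction_on with
  | _ n ih =>
  intro A B s c hlen hc hloc
  have hs1 : ¬ InFirst env k s := fun hf => by
    rw [hlocate_first k s c hf] at hloc; exact (Option.some_ne_none _ hloc).elim
  have hcs : ¬ HasConflict env s := fun h' => hc (conflict_unfocus env s c h')
  cases hno : nullOpt s with
  | none =>
    have hnn : ∀ v, ¬ Nullable env s v := fun v hv => by
      have hx := (hnull s hcs v).mpr hv
      rw [hno] at hx; exact (Option.some_ne_none _ hx.symm).elim
    exact opaque_unfocus env s c hs1 hnn
  | some v =>
    have hv : Nullable env s v := (hnull s hcs v).mp hno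
    cases c with
    | nil => exact hs1
    | cons l c' =>
      have hlen1 : ctxLen c' + 1 ≤ n := hlen
      have hlen' : ctxLen c' < n := by omega
      have h2 : locate k (plug v (Ctx.cons l c')) = none := by
        rw [← hlocate_plug k s (Ctx.cons l c') v hs1 hno rfl]; exact hloc
      cases l with
      | apply f =>
        have hnf : ¬ InFirst env k (Syn.map f s) := fun hf => hs1 (inFirst_inv env hf)
        have hcu : ¬ HasConflict env (unfocus (Syn.map f s) c') := hc
        have hns : nullOpt (Syn.map f s) = some (f v) :=
          (hnull _ (fun h' => hcu (conflict_unfocus env _ c' h')) (f v)).mpr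
            (Nullable.map f hv)
        have hloc' : locate k (⟨_, Syn.map f s, c'⟩ : Focused Token Kind Var _) = none := by
          cases c' with
          | nil => exact hlocate_none₂ k _ hnf
          | cons l'' c'' =>
            rw [hlocate_plug k _ (Ctx.cons l'' c'') (f v) hnf hns rfl]; exact h2
        exact ih (ctxLen c') hlen' _ c' le_rfl hcu hloc'
      | prepend v' =>
        have hnf : ¬ InFirst env k (Syn.seqn (Syn.eps v') s) := fun hf => by
          rcases inFirst_inv env hf with ⟨h', -⟩ | ⟨-, h'⟩
          · exact (inFirst_inv env h').elim
          · exact hs1 h'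
        have hcu : ¬ HasConflict env (unfocus (Syn.seqn (Syn.eps v') s) c') := hc
        have hns : nullOpt (Syn.seqn (Syn.eps v') s) = some (v', v) :=
          (hnull _ (fun h' => hcu (conflict_unfocus env _ c' h')) _).mpr
            (Nullable.seqn (Nullable.eps v') hv)
        have hloc' : locate k (⟨_, Syn.seqn (Syn.eps v') s, c'⟩ :
            Focused Token Kind Var _) = none := by
          cases c' with
          | nil => exact hlocate_none₂ k _ hnf
          | cons l'' c'' =>
            rw [hlocate_plug k _ (Ctx.cons l'' c'') (v', v) hnf hns rfl]; exact h2
        exact ih (ctxLen c') hlen' _ c' le_rfl hcu hloc'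
      | followBy s' =>
        have h2' : locate k (⟨_, s', Ctx.cons (Layer.prepend v) c'⟩ :
            Focused Token Kind Var _) = none := h2
        have hs' : ¬ InFirst env k s' := fun hf => by
          rw [hlocate_first k s' _ hf] at h2'; exact (Option.some_ne_none _ h2').elim
        have hnf : ¬ InFirst env k (Syn.seqn s s') := fun hf => by
          rcases inFirst_inv env hf with ⟨h', -⟩ | ⟨-, h'⟩
          · exact hs1 h'
          · exact hs' h'
        have hcu : ¬ HasConflict env (unfocus (Syn.seqn s s') c') := hc
        have hct : ¬ HasConflict env (Syn.seqn s s') :=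
          fun h' => hcu (conflict_unfocus env _ c' h')
        have hcs' : ¬ HasConflict env s' := fun h' => hct (HasConflict.seqnR h')
        cases hno' : nullOpt s' with
        | none =>
          have hnn : ∀ w, ¬ Nullable env (Syn.seqn s s') w := fun w hw => by
            have hps := (nullable_inv env hw).2
            have hx := (hnull s' hcs' _).mpr hps
            rw [hno'] at hx; exact (Option.some_ne_none _ hx.symm).elim
          exact opaque_unfocus env _ c' hnf hnn
        | some w =>
          have hw : Nullable env s' w := (hnull s' hcs' w).mp hno'
          have h3 : locate k (plug w (Ctx.cons (Layer.prepend v) c')) = none :=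
            (hlocate_plug k s' (Ctx.cons (Layer.prepend v) c') w hs' hno' rfl).symm.trans h2'
          have hns : nullOpt (Syn.seqn s s') = some (v, w) :=
            (hnull _ hct _).mpr (Nullable.seqn hv hw)
          have hloc' : locate k (⟨_, Syn.seqn s s', c'⟩ :
              Focused Token Kind Var _) = none := by
            cases c' with
            | nil => exact hlocate_none₂ k _ hnf
            | cons l'' c'' =>
              rw [hlocate_plug k _ (Ctx.cons l'' c'') (v, w) hnf hns rfl]; exact h3
          exact ih (ctxLen c') hlen' _ c' le_rfl hcu hloc'


end
end
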